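/- arXiv:2506.06264 — 3 statements merged into one kernel-verified Lean document; each statement's English description precedes it below -/
import Mathlib

section
/- Let ω ∈ ℤⁿ and let b₀,…,b_k ∈ ℂ[x₁,…,xₙ] be nonzero polynomials such that for each j the initial form in_ω(b_j) is a single term with exponent α_j; set ν := (⟨ω,α₀⟩,…,⟨ω,α_k⟩) ∈ ℤ^{k+1}. Let p ∈ ℂ[z₀,…,z_k] be ν-homogeneous of degree i, i.e., every monomial z^a appearing in p satisfies ⟨ν,a⟩ = i. Assume that q := p(b₀,…,b_k) is nonzero and that v_ω(q) = i (no cancellation of top ω-degree terms occurs). Then the ω-homogenization of the substituted polynomial equals the substitution of the ω-homogenizations: [p(b₀,…,b_k)]_t^ω = p(b₀,ₜ^ω,…,b_k,ₜ^ω), where on the right-hand side p is evaluated in ℂ[x₁,…,xₙ][t] by sending z_j ↦ (b_j)_t^ω. -/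
open MvPolynomial Polynomial

noncomputable section

/-- The weighted dot product `⟨ω, α⟩ = Σ_i ω_i · α_i`. -/
def wdot {σ : Type*} (ω : σ → ℤ) (α : σ →₀ ℕ) : ℤ :=
  α.sum fun i e => ω i * (e : ℤ)

/-- The ω-degree `v_ω(f) = max{⟨ω,α⟩ : α ∈ supp f}` (junk value `0` for `f = 0`). -/
def wdeg {σ : Type*} (ω : σ → ℤ) (f : MvPolynomial σ ℂ) : ℤ :=
  WithBot.unbotD 0 (f.support.sup fun α => (wdot ω α : WithBot ℤ))

/-- The initial form `in_ω(f)`, the sum of the terms of `f` of maximal ω-degree. -/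
def initForm {σ : Type*} (ω : σ → ℤ) (f : MvPolynomial σ ℂ) : MvPolynomial σ ℂ :=
  ∑ α ∈ f.support.filter (fun α => wdot ω α = wdeg ω f), monomial α (f.coeff α)

/-- The ω-homogenization `f_t^ω = Σ_α c_α t^{v_ω(f) − ⟨ω,α⟩} x^α ∈ ℂ[x₁,…,xₙ][t]`. -/
def homog {σ : Type*} (ω : σ → ℤ) (f : MvPolynomial σ ℂ) :
    Polynomial (MvPolynomial σ ℂ) :=
  ∑ α ∈ f.support,
    Polynomial.C (monomial α (f.coeff α)) * Polynomial.X ^ (wdeg ω f - wdot ω α).toNat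


namespace HomogAux

open LaurentPolynomial

variable {σ : Type*}

lemma wdot_le_wdeg {ω : σ → ℤ} {f : MvPolynomial σ ℂ} {α : σ →₀ ℕ}
    (h : α ∈ f.support) : wdot ω α ≤ wdeg ω f := by
  have hle : (wdot ω α : WithBot ℤ) ≤ f.support.sup fun β => (wdot ω β : WithBot ℤ) :=
    Finset.le_sup (f := fun β => (wdot ω β : WithBot ℤ)) h
  unfold wdeg
  rcases hsup : f.support.sup fun β => (wdot ω β : WithBot ℤ) with _ | s
  · rw [hsup] at hle; exact absurd hle (WithBot.not_coe_le_bot _)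
  · rw [hsup] at hle
    exact WithBot.coe_le_coe.mp hle

/-- The "dehomogenization into Laurent polynomials" map. -/
def psi (ω : σ → ℤ) :
    MvPolynomial σ ℂ →ₐ[ℂ] LaurentPolynomial (MvPolynomial σ ℂ) :=
  MvPolynomial.aeval fun i => LaurentPolynomial.C (MvPolynomial.X i) * T (-ω i)

lemma prod_T {τ : Type*} (s : Finset τ) (h : τ → ℤ) :
    (∏ j ∈ s, (T (h j) : LaurentPolynomial (MvPolynomial σ ℂ)))
      = T (∑ j ∈ s, h j) := by
  classical
  induction s using Finset.cons_induction with
  | empty => simp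
  | cons j s hj ih => rw [Finset.prod_cons, Finset.sum_cons, T_add, ih]

lemma prod_T_mul {τ : Type*} (ν : τ → ℤ)
    (g : τ → LaurentPolynomial (MvPolynomial σ ℂ)) (a : τ →₀ ℕ) :
    (a.prod fun j e => (g j * T (ν j)) ^ e)
      = T (wdot ν a) * a.prod fun j e => g j ^ e := by
  classical
  unfold wdot Finsupp.prod Finsupp.sum
  have step : ∀ j ∈ a.support,
      (g j * T (ν j)) ^ (a j) = g j ^ (a j) * T (ν j * (a j : ℤ)) := by
    intro j _
    rw [mul_pow, T_pow, mul_comm (ν j) ((a j : ℤ))]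
  rw [Finset.prod_congr rfl step, Finset.prod_mul_distrib, prod_T]
  exact mul_comm _ _

lemma psi_monomial (ω : σ → ℤ) (α : σ →₀ ℕ) (c : ℂ) :
    psi ω (monomial α c)
      = LaurentPolynomial.C (monomial α c) * T (-wdot ω α) := by
  classical
  rw [psi, MvPolynomial.aeval_monomial,
    prod_T_mul (fun i => -ω i) (fun i => LaurentPolynomial.C (MvPolynomial.X i)) α]
  have h1 : wdot (fun i => -ω i) α = -wdot ω α := by
    unfold wdot Finsupp.sum
    simp [neg_mul, Finset.sum_neg_distrib]
  rw [h1]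
  have h2 : (α.prod fun i e => (LaurentPolynomial.C (MvPolynomial.X i) :
      LaurentPolynomial (MvPolynomial σ ℂ)) ^ e)
      = LaurentPolynomial.C (α.prod fun i e => MvPolynomial.X i ^ e) := by
    unfold Finsupp.prod
    rw [map_prod]
    simp
  rw [h2]
  have h3 : (algebraMap ℂ (LaurentPolynomial (MvPolynomial σ ℂ)) c)
      = LaurentPolynomial.C (MvPolynomial.C c) := rfl
  rw [h3, MvPolynomial.monomial_eq, map_mul]
  ring

lemma toLaurent_homog (ω : σ → ℤ) (f : MvPolynomial σ ℂ) :
    Polynomial.toLaurent (homog ω f) = T (wdeg ω f) * psi ω f := by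
  classical
  have key : psi ω f = ∑ α ∈ f.support,
      LaurentPolynomial.C (monomial α (f.coeff α)) * T (-wdot ω α) := by
    conv_lhs => rw [← MvPolynomial.support_sum_monomial_coeff f]
    rw [map_sum]
    exact Finset.sum_congr rfl fun α _ => psi_monomial ω α (f.coeff α)
  rw [homog, map_sum, key, Finset.mul_sum]
  refine Finset.sum_congr rfl fun α hα => ?_
  rw [map_mul, Polynomial.toLaurent_C, Polynomial.toLaurent_X_pow]
  have h : ((wdeg ω f - wdot ω α).toNat : ℤ) = wdeg ω f - wdot ω α :=
    Int.toNat_of_nonneg (sub_nonneg.mpr (wdot_le_wdeg hα))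
  rw [h, mul_left_comm, ← T_add, sub_eq_add_neg]

lemma coeff_initForm (ω : σ → ℤ) (f : MvPolynomial σ ℂ) (β : σ →₀ ℕ) :
    (initForm ω f).coeff β
      = if wdot ω β = wdeg ω f then f.coeff β else 0 := by
  classical
  rw [initForm, MvPolynomial.coeff_sum]
  simp only [MvPolynomial.coeff_monomial]
  rw [Finset.sum_ite_eq']
  by_cases h : β ∈ f.support.filter fun α => wdot ω α = wdeg ω f
  · rw [if_pos h]
    rcases Finset.mem_filter.mp h with ⟨_, h2⟩
    rw [if_pos h2]
  · rw [if_neg h]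
    by_cases h2 : wdot ω β = wdeg ω f
    · have hs : β ∉ f.support := fun hs => h (Finset.mem_filter.mpr ⟨hs, h2⟩)
      rw [if_pos h2, MvPolynomial.notMem_support_iff.mp hs]
    · rw [if_neg h2]

end HomogAux

/-- Let `b₀,…,b_k` be nonzero polynomials whose initial forms are single
terms `in_ω(b_j) = c_j x^{α_j}`, and let `ν := (⟨ω,α₀⟩,…,⟨ω,α_k⟩)`. If `p ∈ ℂ[z₀,…,z_k]`
is ν-homogeneous of degree `i`, `q := p(b₀,…,b_k)` is nonzero and `v_ω(q) = i` (no
cancellation of top ω-degree terms), then `[p(b₀,…,b_k)]_t^ω = p(b₀,ₜ^ω,…,b_k,ₜ^ω)`. -/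
theorem homog_aeval_of_nu_homogeneous {n k : ℕ} (ω : Fin n → ℤ)
    (b : Fin (k + 1) → MvPolynomial (Fin n) ℂ) (hb : ∀ j, b j ≠ 0)
    (α : Fin (k + 1) → (Fin n →₀ ℕ)) (c : Fin (k + 1) → ℂ) (hc : ∀ j, c j ≠ 0)
    (hin : ∀ j, initForm ω (b j) = monomial (α j) (c j))
    (ν : Fin (k + 1) → ℤ) (hν : ν = fun j => wdot ω (α j))
    (p : MvPolynomial (Fin (k + 1)) ℂ) (i : ℤ)
    (hhom : ∀ a ∈ p.support, wdot ν a = i)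
    (hq : MvPolynomial.aeval b p ≠ 0)
    (hdeg : wdeg ω (MvPolynomial.aeval b p) = i) :
    homog ω (MvPolynomial.aeval b p) =
      MvPolynomial.aeval (fun j => homog ω (b j)) p := by
  classical
  open HomogAux LaurentPolynomial in
  subst hν
  -- each b j has wdeg equal to ν j
  have hwdeg : ∀ j, wdeg ω (b j) = wdot ω (α j) := by
    intro j
    have h1 := congrArg (fun f => MvPolynomial.coeff (α j) f) (hin j)
    simp only [coeff_initForm, MvPolynomial.coeff_monomial, if_pos rfl] at h1
    by_cases h2 : wdot ω (α j) = wdeg ω (b j)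
    · exact h2.symm
    · rw [if_neg h2] at h1
      exact absurd h1 (Ne.symm (hc j))
  set ν : Fin (k + 1) → ℤ := fun j => wdot ω (α j) with hν
  -- the toLaurent algebra hom
  have hcomm : ∀ z : ℂ, Polynomial.toLaurent
      (algebraMap ℂ (Polynomial (MvPolynomial (Fin n) ℂ)) z)
      = algebraMap ℂ (LaurentPolynomial (MvPolynomial (Fin n) ℂ)) z := by
    intro z
    show Polynomial.toLaurent (Polynomial.C (MvPolynomial.C z)) = _
    rw [Polynomial.toLaurent_C]
    rfl
  let L : Polynomial (MvPolynomial (Fin n) ℂ) →ₐ[ℂ]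
      LaurentPolynomial (MvPolynomial (Fin n) ℂ) :=
    { Polynomial.toLaurent with commutes' := hcomm }
  apply Polynomial.toLaurent_injective
  have hL : ∀ g, Polynomial.toLaurent g = L g := fun _ => rfl
  rw [hL, hL]
  have hfun : (fun j => L (homog ω (b j)))
      = fun j => psi ω (b j) * T (ν j) := by
    funext j
    show Polynomial.toLaurent (homog ω (b j)) = _
    rw [toLaurent_homog, hwdeg, mul_comm]
  have hRHS : L (MvPolynomial.aeval (fun j => homog ω (b j)) p)
      = MvPolynomial.aeval (fun j => psi ω (b j) * T (ν j)) p := by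
    rw [show L (MvPolynomial.aeval (fun j => homog ω (b j)) p)
        = (L.comp (MvPolynomial.aeval fun j => homog ω (b j))) p from rfl,
      MvPolynomial.comp_aeval, hfun]
  have hLHS : L (homog ω (MvPolynomial.aeval b p))
      = T i * psi ω (MvPolynomial.aeval b p) := by
    show Polynomial.toLaurent _ = _
    rw [toLaurent_homog, hdeg]
  rw [hRHS, hLHS]
  have hpsiq : psi ω (MvPolynomial.aeval b p)
      = MvPolynomial.aeval (fun j => psi ω (b j)) p := by
    rw [show psi ω (MvPolynomial.aeval b p)
        = ((psi ω).comp (MvPolynomial.aeval b)) p from rfl,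
      MvPolynomial.comp_aeval]
  rw [hpsiq]
  -- now expand p as a sum of monomials
  conv_lhs => rw [← MvPolynomial.support_sum_monomial_coeff p]
  conv_rhs => rw [← MvPolynomial.support_sum_monomial_coeff p]
  rw [map_sum, map_sum, Finset.mul_sum]
  refine Finset.sum_congr rfl fun a ha => ?_
  rw [MvPolynomial.aeval_monomial, MvPolynomial.aeval_monomial,
    prod_T_mul ν (fun j => psi ω (b j)) a, hhom a ha]
  ring
end
end

section
/- Let ω ∈ ℤⁿ and let b₀,…,b_k ∈ ℂ[x₁,…,xₙ] be nonzero polynomials such that for each j the initial form in_ω(b_j) is a single term with exponent α_j; set ν := (⟨ω,α₀⟩,…,⟨ω,α_k⟩) ∈ ℤ^{k+1}, and let I ⊆ ℂ[z₀,…,z_k] be the kernel of the ℂ-algebra homomorphism ℂ[z₀,…,z_k] → ℂ[x₁,…,xₙ] sending z_j ↦ b_j. Assume {b₀,…,b_k} is a SAGBI basis for S = ℂ[b₀,…,b_k] with respect to ω. Then the kernel of the ℂ[t]-algebra homomorphism ℂ[z₀,…,z_k][t] → ℂ[x₁,…,xₙ][t] sending z_j ↦ (b_j)_t^ω and t ↦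 t equals the homogenized ideal I_t^ν; consequently the ℂ[t]-subalgebra of ℂ[x₁,…,xₙ][t] generated by (b₀)_t^ω,…,(b_k)_t^ω is isomorphic to ℂ[z₀,…,z_k][t]/I_t^ν. -/
open MvPolynomial Polynomial

noncomputable section

/-- The homogenized ideal `I_t^ν`, generated by `{f_t^ν : f ∈ I, f ≠ 0}`. -/
def idealHomog {σ : Type*} (ν : σ → ℤ) (I : Ideal (MvPolynomial σ ℂ)) :
    Ideal (Polynomial (MvPolynomial σ ℂ)) :=
  Ideal.span {g | ∃ f ∈ I, f ≠ 0 ∧ g = homog ν f}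

/-- The initial ideal `in_ν(I)`, generated by `{in_ν(f) : f ∈ I, f ≠ 0}`. -/
def initIdeal {σ : Type*} (ν : σ → ℤ) (I : Ideal (MvPolynomial σ ℂ)) :
    Ideal (MvPolynomial σ ℂ) :=
  Ideal.span {g | ∃ f ∈ I, f ≠ 0 ∧ g = initForm ν f}

/-- `{b i}` is a SAGBI basis for `S = ℂ[b₀,…,b_k]` with respect to `ω` if the ℂ-linear span
of `{in_ω(f) : f ∈ S, f ≠ 0}` equals the ℂ-subalgebra generated by the `in_ω(b_i)`. -/
def IsSagbiBasis {σ : Type*} {ι : Type*} (ω : σ → ℤ) (b : ι → MvPolynomial σ ℂ) : Prop :=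
  Submodule.span ℂ
      {g | ∃ f ∈ Algebra.adjoin ℂ (Set.range b), f ≠ 0 ∧ g = initForm ω f}
    = Subalgebra.toSubmodule (Algebra.adjoin ℂ (Set.range fun i => initForm ω (b i)))





section aux
variable {σ : Type*} {ω : σ → ℤ}

lemma wdot_zero : wdot ω 0 = 0 := Finsupp.sum_zero_index

lemma wdot_add (a b : σ →₀ ℕ) : wdot ω (a + b) = wdot ω a + wdot ω b := by
  classical
  exact Finsupp.sum_add_index' (by simp) (by intro i e₁ e₂; push_cast; ring)

lemma wdeg_eq_sup' {f : MvPolynomial σ ℂ} (hf : f ≠ 0) :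
    wdeg ω f = f.support.sup' (MvPolynomial.support_nonempty.2 hf) (fun α => wdot ω α) := by
  rw [wdeg, show (f.support.sup fun α => ((wdot ω α : ℤ) : WithBot ℤ)) =
      f.support.sup (((↑) : ℤ → WithBot ℤ) ∘ fun α => wdot ω α) from rfl,
    ← Finset.coe_sup' (MvPolynomial.support_nonempty.2 hf)]
  rfl

lemma wdot_le_wdeg {f : MvPolynomial σ ℂ} {a : σ →₀ ℕ} (h : a ∈ f.support) :
    wdot ω a ≤ wdeg ω f := by
  have hf : f ≠ 0 := by rintro rfl; simp at h
  rw [wdeg_eq_sup' hf]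
  exact Finset.le_sup' _ h

lemma exists_wdeg {f : MvPolynomial σ ℂ} (hf : f ≠ 0) :
    ∃ a ∈ f.support, wdot ω a = wdeg ω f := by
  obtain ⟨a, ha, he⟩ := Finset.exists_mem_eq_sup' (MvPolynomial.support_nonempty.2 hf)
    (fun α => wdot ω α)
  exact ⟨a, ha, by rw [wdeg_eq_sup' hf, he]⟩

end aux

section aux2
variable {σ : Type*} {ω ν : σ → ℤ}

/-- the ν-homogeneous component of weight `e` -/
def sel (ν : σ → ℤ) (e : ℤ) (p : MvPolynomial σ ℂ) : MvPolynomial σ ℂ :=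
  ∑ β ∈ p.support.filter (fun β => wdot ν β = e), monomial β (p.coeff β)

lemma coeff_sel (e : ℤ) (p : MvPolynomial σ ℂ) (β : σ →₀ ℕ) :
    (sel ν e p).coeff β = if wdot ν β = e then p.coeff β else 0 := by
  classical
  rw [sel, MvPolynomial.coeff_sum]
  rw [Finset.sum_congr rfl (fun b _ => MvPolynomial.coeff_monomial β b (p.coeff b))]
  rw [Finset.sum_ite_eq' (p.support.filter fun β => wdot ν β = e) β (fun b => p.coeff b)]
  by_cases h1 : wdot ν β = e
  · by_cases h2 : β ∈ p.support
    · simp [Finset.mem_filter, h1, h2]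
    · have : p.coeff β = 0 := by simpa [MvPolynomial.mem_support_iff, not_not] using h2
      simp [Finset.mem_filter, h1, h2, this]
  · simp [Finset.mem_filter, h1]

lemma sel_zero (e : ℤ) : sel ν e (0 : MvPolynomial σ ℂ) = 0 := by simp [sel]

/-- the (ν,1)-homogeneous component of weight `d` of an element of `ℂ[z][t]` -/
def tcomp (ν : σ → ℤ) (d : ℤ) (g : Polynomial (MvPolynomial σ ℂ)) :
    Polynomial (MvPolynomial σ ℂ) :=
  ∑ m ∈ g.support, Polynomial.C (sel ν (d - m) (g.coeff m)) * Polynomial.X ^ m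

lemma coeff_tcomp (d : ℤ) (g : Polynomial (MvPolynomial σ ℂ)) (m : ℕ) :
    (tcomp ν d g).coeff m = sel ν (d - m) (g.coeff m) := by
  classical
  rw [tcomp, Polynomial.finset_sum_coeff]
  rw [Finset.sum_congr rfl (fun m' _ => by
    rw [Polynomial.coeff_C_mul, Polynomial.coeff_X_pow, mul_ite, mul_one, mul_zero])]
  rw [Finset.sum_ite_eq g.support m (fun m' => sel ν (d - m') (g.coeff m'))]
  by_cases h : m ∈ g.support
  · simp [h]
  · have : g.coeff m = 0 := Polynomial.notMem_support_iff.1 h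
    simp [h, this, sel_zero]

/-- `h ∈ ℂ[x][t]` is (ω,1)-homogeneous of total weight `d` -/
def IsHom (ω : σ → ℤ) (d : ℤ) (h : Polynomial (MvPolynomial σ ℂ)) : Prop :=
  ∀ m a, (h.coeff m).coeff a ≠ 0 → (m : ℤ) + wdot ω a = d

lemma isHom_zero (d : ℤ) : IsHom ω d (0 : Polynomial (MvPolynomial σ ℂ)) := by
  intro m a h; simp at h

lemma isHom_sum {ι : Type*} {s : Finset ι} {d : ℤ} {h : ι → Polynomial (MvPolynomial σ ℂ)}
    (H : ∀ i ∈ s, IsHom ω d (h i)) : IsHom ω d (∑ i ∈ s, h i) := by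
  intro m a hne
  rw [Polynomial.finset_sum_coeff, MvPolynomial.coeff_sum] at hne
  obtain ⟨i, hi, hne⟩ := Finset.exists_ne_zero_of_sum_ne_zero hne
  exact H i hi m a hne

lemma isHom_mul {d₁ d₂ : ℤ} {h₁ h₂ : Polynomial (MvPolynomial σ ℂ)}
    (H₁ : IsHom ω d₁ h₁) (H₂ : IsHom ω d₂ h₂) : IsHom ω (d₁ + d₂) (h₁ * h₂) := by
  classical
  intro m a hne
  rw [Polynomial.coeff_mul] at hne
  rw [MvPolynomial.coeff_sum] at hne
  obtain ⟨⟨m₁, m₂⟩, hm, hne⟩ := Finset.exists_ne_zero_of_sum_ne_zero hne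
  rw [MvPolynomial.coeff_mul] at hne
  obtain ⟨⟨a₁, a₂⟩, ha, hne⟩ := Finset.exists_ne_zero_of_sum_ne_zero hne
  have h1 := H₁ m₁ a₁ (left_ne_zero_of_mul hne)
  have h2 := H₂ m₂ a₂ (right_ne_zero_of_mul hne)
  have hm' : m₁ + m₂ = m := (Finset.HasAntidiagonal.mem_antidiagonal).1 hm
  have ha' : a₁ + a₂ = a := (Finset.HasAntidiagonal.mem_antidiagonal).1 ha
  rw [← hm', ← ha', wdot_add]
  push_cast
  omega

lemma isHom_one : IsHom ω 0 (1 : Polynomial (MvPolynomial σ ℂ)) := by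
  classical
  intro m a h
  rw [Polynomial.coeff_one] at h
  split_ifs at h with hm
  · subst hm
    rw [MvPolynomial.coeff_one] at h
    split_ifs at h with ha
    · subst ha; simp [wdot_zero]
    · simp at h
  · simp at h

lemma isHom_pow {d : ℤ} {h : Polynomial (MvPolynomial σ ℂ)} (H : IsHom ω d h) (e : ℕ) :
    IsHom ω (e * d) (h ^ e) := by
  induction e with
  | zero => simpa using isHom_one
  | succ e ih =>
      rw [pow_succ, show ((e + 1 : ℕ) : ℤ) * d = ↑e * d + d by push_cast; ring]
      exact isHom_mul ih H

lemma isHom_X : IsHom ω 1 (Polynomial.X : Polynomial (MvPolynomial σ ℂ)) := by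
  classical
  intro m a h
  rw [Polynomial.coeff_X] at h
  split_ifs at h with hm
  · subst hm
    rw [MvPolynomial.coeff_one] at h
    split_ifs at h with ha
    · subst ha; simp [wdot_zero]
    · simp at h
  · simp at h

lemma isHom_C_monomial (a : σ →₀ ℕ) (c : ℂ) :
    IsHom ω (wdot ω a) (Polynomial.C (monomial a c)) := by
  classical
  intro m b h
  rw [Polynomial.coeff_C] at h
  split_ifs at h with hm
  · subst hm
    rw [MvPolynomial.coeff_monomial] at h
    split_ifs at h with hb
    · subst hb; simp
    · simp at h
  · simp at h

end aux2

section aux3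
variable {σ : Type*} {ω ν : σ → ℤ}

lemma isHom_prod {ι : Type*} {s : Finset ι} {d : ι → ℤ} {h : ι → Polynomial (MvPolynomial σ ℂ)}
    (H : ∀ i ∈ s, IsHom ω (d i) (h i)) : IsHom ω (∑ i ∈ s, d i) (∏ i ∈ s, h i) := by
  classical
  induction s using Finset.induction with
  | empty => simpa using isHom_one
  | @insert x s' hx ih =>
      rw [Finset.sum_insert hx, Finset.prod_insert hx]
      exact isHom_mul (H x (Finset.mem_insert_self x s'))
        (ih fun i hi => H i (Finset.mem_insert_of_mem hi))

lemma isHom_tcomp (d : ℤ) (g : Polynomial (MvPolynomial σ ℂ)) : IsHom ν d (tcomp ν d g) := by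
  intro m a h
  rw [coeff_tcomp, coeff_sel] at h
  split_ifs at h with hw
  · omega
  · simp at h

lemma poly_eval_one (h : Polynomial (MvPolynomial σ ℂ)) :
    h.eval 1 = ∑ m ∈ h.support, h.coeff m := by
  rw [Polynomial.eval_eq_sum, Polynomial.sum_def]
  exact Finset.sum_congr rfl (fun m _ => by rw [one_pow, mul_one])

lemma coeff_eval_one (h : Polynomial (MvPolynomial σ ℂ)) (a : σ →₀ ℕ) :
    (h.eval 1).coeff a = ∑ m ∈ h.support, (h.coeff m).coeff a := by
  rw [poly_eval_one, MvPolynomial.coeff_sum]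

lemma isHom_eval_one_eq_zero {d : ℤ} {h : Polynomial (MvPolynomial σ ℂ)}
    (H : IsHom ω d h) (h1 : h.eval 1 = 0) : h = 0 := by
  classical
  ext m a
  rw [Polynomial.coeff_zero, MvPolynomial.coeff_zero]
  by_contra hne
  have hsum : ∑ m' ∈ h.support, (h.coeff m').coeff a = 0 := by
    rw [← coeff_eval_one, h1, MvPolynomial.coeff_zero]
  have hmem : m ∈ h.support := by
    rw [Polynomial.mem_support_iff]
    intro h0; rw [h0] at hne; simp at hne
  have : ∑ m' ∈ h.support, (h.coeff m').coeff a = (h.coeff m).coeff a := by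
    apply Finset.sum_eq_single_of_mem m hmem
    intro m' _ hm'
    by_contra hne'
    have e1 := H m' a hne'
    have e2 := H m a hne
    have : (m' : ℤ) = m := by omega
    exact hm' (by exact_mod_cast this)
  exact hne (by rw [← this, hsum])

lemma isHom_indep {D : Finset ℤ} {h : ℤ → Polynomial (MvPolynomial σ ℂ)}
    (H : ∀ d ∈ D, IsHom ω d (h d)) (hs : ∑ d ∈ D, h d = 0) : ∀ d ∈ D, h d = 0 := by
  classical
  intro d hd
  by_contra hne
  obtain ⟨m, hm⟩ : ∃ m, (h d).coeff m ≠ 0 := by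
    by_contra hall; push_neg at hall
    exact hne (Polynomial.ext fun m => by rw [hall m, Polynomial.coeff_zero])
  obtain ⟨a, ha⟩ : ∃ a, ((h d).coeff m).coeff a ≠ 0 := by
    by_contra hall; push_neg at hall
    exact hm (MvPolynomial.ext _ _ fun a => by rw [hall a, MvPolynomial.coeff_zero])
  have hsum : ∑ d' ∈ D, ((h d').coeff m).coeff a = 0 := by
    have := congrArg (fun q => (Polynomial.coeff q m).coeff a) hs
    simpa [Polynomial.finset_sum_coeff, MvPolynomial.coeff_sum] using this
  have : ∑ d' ∈ D, ((h d').coeff m).coeff a = ((h d).coeff m).coeff a := by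
    apply Finset.sum_eq_single_of_mem d hd
    intro d' hd' hdd
    by_contra hne'
    have e1 := H d' hd' m a hne'
    have e2 := H d hd m a ha
    exact hdd (by omega)
  exact ha (by rw [← this, hsum])

/-- the relevant set of weights of `g` -/
def wset (ν : σ → ℤ) (g : Polynomial (MvPolynomial σ ℂ)) : Finset ℤ :=
  g.support.biUnion (fun m => (g.coeff m).support.image (fun a => (m : ℤ) + wdot ν a))

lemma sum_tcomp (g : Polynomial (MvPolynomial σ ℂ)) :
    ∑ d ∈ wset ν g, tcomp ν d g = g := by
  classical
  ext m a
  rw [Polynomial.finset_sum_coeff]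
  rw [Finset.sum_congr rfl (fun d _ => coeff_tcomp d g m)]
  rw [MvPolynomial.coeff_sum]
  rw [Finset.sum_congr rfl (fun d _ => coeff_sel (d - m) (g.coeff m) a)]
  rw [Finset.sum_congr rfl (fun d (_ : d ∈ wset ν g) => show
      (if wdot ν a = d - (m : ℤ) then (g.coeff m).coeff a else 0)
        = (if d = (m : ℤ) + wdot ν a then (g.coeff m).coeff a else 0) from by
    split_ifs with h1 h2 <;> first | rfl | omega)]
  rw [Finset.sum_ite_eq' (wset ν g) ((m : ℤ) + wdot ν a) (fun _ => (g.coeff m).coeff a)]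
  split_ifs with hmem
  · rfl
  · by_contra hne
    apply hmem
    rw [wset, Finset.mem_biUnion]
    refine ⟨m, ?_, ?_⟩
    · rw [Polynomial.mem_support_iff]
      intro h0; rw [h0] at hne; simp at hne
    · rw [Finset.mem_image]
      exact ⟨a, MvPolynomial.mem_support_iff.2 (fun h0 => hne h0.symm), rfl⟩
  
open Classical in
lemma coeff_homog (f : MvPolynomial σ ℂ) (m : ℕ) (a : σ →₀ ℕ) :
    ((homog ω f).coeff m).coeff a =
      if a ∈ f.support ∧ (wdeg ω f - wdot ω a).toNat = m then f.coeff a else 0 := by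
  classical
  rw [homog, Polynomial.finset_sum_coeff]
  rw [Finset.sum_congr rfl (fun a' _ => by
    rw [Polynomial.coeff_C_mul, Polynomial.coeff_X_pow, mul_ite, mul_one, mul_zero])]
  rw [MvPolynomial.coeff_sum]
  rw [Finset.sum_congr rfl (fun a' _ => by
    rw [apply_ite (MvPolynomial.coeff a), MvPolynomial.coeff_zero,
      MvPolynomial.coeff_monomial])]
  rw [show (∑ a' ∈ f.support, if m = (wdeg ω f - wdot ω a').toNat
        then (if a' = a then f.coeff a' else 0) else 0)
      = ∑ a' ∈ f.support, if a' = a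
        then (if m = (wdeg ω f - wdot ω a').toNat then f.coeff a' else 0) else 0 from
    Finset.sum_congr rfl (fun a' _ => by
      split_ifs with h1 h2 h2 <;> simp_all)]
  rw [Finset.sum_ite_eq' f.support a
    (fun a' => if m = (wdeg ω f - wdot ω a').toNat then f.coeff a' else 0)]
  by_cases h1 : a ∈ f.support
  · by_cases h2 : (wdeg ω f - wdot ω a).toNat = m
    · rw [if_pos h1, if_pos h2.symm, if_pos ⟨h1, h2⟩]
    · rw [if_pos h1, if_neg (fun h => h2 h.symm), if_neg (fun h => h2 h.2)]
  · rw [if_neg h1, if_neg (fun h => h1 h.1)]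

open Classical in
lemma isHom_homog (f : MvPolynomial σ ℂ) : IsHom ω (wdeg ω f) (homog ω f) := by
  intro m a h
  rw [coeff_homog] at h
  split_ifs at h with hc
  · obtain ⟨hmem, hm⟩ := hc
    have hle := wdot_le_wdeg (ω := ω) hmem
    have : ((wdeg ω f - wdot ω a).toNat : ℤ) = wdeg ω f - wdot ω a := Int.toNat_of_nonneg (by omega)
    omega
  · simp at h

lemma eval_one_homog (f : MvPolynomial σ ℂ) : (homog ω f).eval 1 = f := by
  rw [homog]
  rw [show Polynomial.eval 1 (∑ α ∈ f.support,
      Polynomial.C (monomial α (f.coeff α)) * Polynomial.X ^ (wdeg ω f - wdot ω α).toNat)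
    = ∑ α ∈ f.support, (monomial α (f.coeff α)) from by
      rw [Polynomial.eval_finset_sum]
      exact Finset.sum_congr rfl (fun a _ => by simp)]
  exact MvPolynomial.support_sum_monomial_coeff f

end aux3

section aux4
variable {σ τ : Type*} {ω : σ → ℤ} {ν : τ → ℤ} {b : τ → MvPolynomial σ ℂ}

lemma isHom_algebraMap (c : ℂ) :
    IsHom ω 0 (algebraMap ℂ (Polynomial (MvPolynomial σ ℂ)) c) := by
  have : algebraMap ℂ (Polynomial (MvPolynomial σ ℂ)) c
      = Polynomial.C (MvPolynomial.monomial 0 c) := by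
    rw [Polynomial.algebraMap_apply, MvPolynomial.algebraMap_eq, MvPolynomial.C_apply]
  rw [this, show (0 : ℤ) = wdot ω (0 : σ →₀ ℕ) from wdot_zero.symm]
  exact isHom_C_monomial 0 c

lemma isHom_F (hdeg : ∀ j, ν j = wdeg ω (b j)) (β : τ →₀ ℕ) (c : ℂ) :
    IsHom ω (wdot ν β) ((MvPolynomial.aeval (fun j => homog ω (b j))) (monomial β c)) := by
  rw [MvPolynomial.aeval_monomial]
  have hprod : IsHom ω (∑ j ∈ β.support, (β j : ℤ) * ν j)
      (∏ j ∈ β.support, (homog ω (b j)) ^ (β j)) := by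
    apply isHom_prod
    intro j _
    rw [hdeg j]
    exact isHom_pow (isHom_homog (b j)) (β j)
  have : wdot ν β = 0 + ∑ j ∈ β.support, (β j : ℤ) * ν j := by
    rw [zero_add, wdot, Finsupp.sum]
    exact Finset.sum_congr rfl (fun j _ => mul_comm _ _)
  rw [this]
  exact isHom_mul (isHom_algebraMap c) (by
    rw [show β.prod (fun j k => (homog ω (b j)) ^ k) = ∏ j ∈ β.support, (homog ω (b j)) ^ (β j)
      from rfl]
    exact hprod)

lemma phi_hom (hdeg : ∀ j, ν j = wdeg ω (b j)) {d : ℤ} {p : Polynomial (MvPolynomial τ ℂ)}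
    (hp : IsHom ν d p) :
    IsHom ω d (Polynomial.eval₂ (MvPolynomial.aeval (fun j => homog ω (b j)) :
      MvPolynomial τ ℂ →ₐ[ℂ] Polynomial (MvPolynomial σ ℂ)).toRingHom Polynomial.X p) := by
  set F := (MvPolynomial.aeval (fun j => homog ω (b j)) :
      MvPolynomial τ ℂ →ₐ[ℂ] Polynomial (MvPolynomial σ ℂ))
  set φ := Polynomial.eval₂RingHom F.toRingHom (Polynomial.X (R := MvPolynomial σ ℂ))
  show IsHom ω d (φ p)
  have hps : p = ∑ m ∈ p.support, Polynomial.monomial m (p.coeff m) := p.as_sum_support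
  rw [show φ p = ∑ m ∈ p.support, φ (Polynomial.monomial m (p.coeff m)) from by
    rw [← map_sum, ← hps]]
  apply isHom_sum
  intro m hm
  rw [show φ (Polynomial.monomial m (p.coeff m)) = F (p.coeff m) * Polynomial.X ^ m from
    Polynomial.eval₂_monomial _ _]
  have hq : F (p.coeff m) = ∑ β ∈ (p.coeff m).support,
      F (monomial β ((p.coeff m).coeff β)) := by
    rw [← map_sum, MvPolynomial.support_sum_monomial_coeff]
  rw [hq, Finset.sum_mul]
  apply isHom_sum
  intro β hβ
  have hd : d = wdot ν β + (m : ℤ) * 1 := by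
    have := hp m β (MvPolynomial.mem_support_iff.1 hβ)
    omega
  rw [hd]
  exact isHom_mul (isHom_F hdeg β _) (isHom_pow isHom_X m)

lemma evalF_one (q : MvPolynomial τ ℂ) :
    Polynomial.eval 1 ((MvPolynomial.aeval (fun j => homog ω (b j))) q)
      = MvPolynomial.aeval b q := by
  induction q using MvPolynomial.induction_on with
  | C c => simp [Polynomial.algebraMap_apply]
  | add p q ihp ihq => simp [map_add, ihp, ihq]
  | mul_X p j ih => simp [map_mul, ih, eval_one_homog]

lemma phi_eval_one (p : Polynomial (MvPolynomial τ ℂ)) :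
    Polynomial.eval 1 (Polynomial.eval₂ (MvPolynomial.aeval (fun j => homog ω (b j)) :
        MvPolynomial τ ℂ →ₐ[ℂ] Polynomial (MvPolynomial σ ℂ)).toRingHom Polynomial.X p)
      = MvPolynomial.aeval b (Polynomial.eval 1 p) := by
  induction p using Polynomial.induction_on' with
  | add p q ihp ihq => rw [Polynomial.eval₂_add, Polynomial.eval_add, Polynomial.eval_add,
      map_add, ihp, ihq]
  | monomial m q =>
      rw [Polynomial.eval₂_monomial, Polynomial.eval_mul, Polynomial.eval_pow,
        Polynomial.eval_X, one_pow, mul_one, Polynomial.eval_monomial, one_pow, mul_one]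
      exact evalF_one q

end aux4

section aux5
variable {σ τ : Type*} {ω : σ → ℤ} {ν : τ → ℤ} {b : τ → MvPolynomial σ ℂ}

lemma hom_eq_homog {d : ℤ} {g' : Polynomial (MvPolynomial τ ℂ)}
    (hhom : IsHom ν d g') (hg0 : g' ≠ 0) :
    g' = homog ν (g'.eval 1) * Polynomial.X ^ (d - wdeg ν (g'.eval 1)).toNat := by
  classical
  set f := g'.eval 1 with hf
  have hf0 : f ≠ 0 := fun h => hg0 (isHom_eval_one_eq_zero hhom h)
  have hC1 : ∀ m a, (g'.coeff m).coeff a ≠ 0 → f.coeff a = (g'.coeff m).coeff a := by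
    intro m a hne
    rw [hf, coeff_eval_one]
    apply Finset.sum_eq_single_of_mem m
    · rw [Polynomial.mem_support_iff]
      intro h0; rw [h0] at hne; simp at hne
    · intro m' _ hm'
      by_contra hne'
      have e1 := hhom m' a hne'
      have e2 := hhom m a hne
      exact hm' (by exact_mod_cast show (m' : ℤ) = m by omega)
  have hC2 : ∀ a, f.coeff a ≠ 0 → ∃ m : ℕ, (g'.coeff m).coeff a ≠ 0 := by
    intro a hne
    rw [hf, coeff_eval_one] at hne
    obtain ⟨m, _, hm⟩ := Finset.exists_ne_zero_of_sum_ne_zero hne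
    exact ⟨m, hm⟩
  have hdle : wdeg ν f ≤ d := by
    obtain ⟨a, hasupp, haw⟩ := exists_wdeg hf0
    obtain ⟨m, hm⟩ := hC2 a (MvPolynomial.mem_support_iff.1 hasupp)
    have := hhom m a hm
    rw [← haw]
    omega
  have he : ((d - wdeg ν f).toNat : ℤ) = d - wdeg ν f := Int.toNat_of_nonneg (by omega)
  ext m a
  rw [Polynomial.coeff_mul_X_pow']
  by_cases hA : (g'.coeff m).coeff a = 0
  · rw [hA]
    split_ifs with hle
    · rw [coeff_homog]
      split_ifs with hcond
      · exfalso
        obtain ⟨hmem, hnat⟩ := hcond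
        have hfa0 : f.coeff a ≠ 0 := MvPolynomial.mem_support_iff.1 hmem
        obtain ⟨m₁, hm₁⟩ := hC2 a hfa0
        have e1 := hhom m₁ a hm₁
        have h1 : wdot ν a ≤ wdeg ν f := wdot_le_wdeg hmem
        have h2 : ((wdeg ν f - wdot ν a).toNat : ℤ) = wdeg ν f - wdot ν a :=
          Int.toNat_of_nonneg (by omega)
        have hmm : m₁ = m := by omega
        rw [hmm] at hm₁
        exact hm₁ hA
      · rfl
    · simp
  · have hfa : f.coeff a = (g'.coeff m).coeff a := hC1 m a hA
    have hmem : a ∈ f.support := MvPolynomial.mem_support_iff.2 (by rw [hfa]; exact hA)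
    have hwd : (m : ℤ) + wdot ν a = d := hhom m a hA
    have h1 : wdot ν a ≤ wdeg ν f := wdot_le_wdeg hmem
    have h2 : ((wdeg ν f - wdot ν a).toNat : ℤ) = wdeg ν f - wdot ν a :=
      Int.toNat_of_nonneg (by omega)
    have hle : (d - wdeg ν f).toNat ≤ m := by omega
    rw [if_pos hle, coeff_homog, if_pos ⟨hmem, by omega⟩]
    exact hfa.symm

lemma hom_mem_idealHomog (I : Ideal (MvPolynomial τ ℂ))
    (hI : I = RingHom.ker (MvPolynomial.aeval b :
      MvPolynomial τ ℂ →ₐ[ℂ] MvPolynomial σ ℂ).toRingHom)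
    {d : ℤ} {g' : Polynomial (MvPolynomial τ ℂ)} (hhom : IsHom ν d g')
    (hker : Polynomial.eval₂ (MvPolynomial.aeval (fun j => homog ω (b j)) :
      MvPolynomial τ ℂ →ₐ[ℂ] Polynomial (MvPolynomial σ ℂ)).toRingHom Polynomial.X g' = 0) :
    g' ∈ idealHomog ν I := by
  by_cases hg0 : g' = 0
  · rw [hg0]; exact Ideal.zero_mem _
  set f := g'.eval 1 with hf
  have hf0 : f ≠ 0 := fun h => hg0 (isHom_eval_one_eq_zero hhom h)
  have hfI : f ∈ I := by
    rw [hI, RingHom.mem_ker]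
    have := phi_eval_one (ω := ω) (b := b) g'
    rw [hker] at this
    simpa using this.symm
  have hgen : homog ν f ∈ idealHomog ν I :=
    Ideal.subset_span ⟨f, hfI, hf0, rfl⟩
  rw [hom_eq_homog hhom hg0]
  exact Ideal.mul_mem_right _ _ hgen

lemma ker_eq_idealHomog (hdeg : ∀ j, ν j = wdeg ω (b j)) (I : Ideal (MvPolynomial τ ℂ))
    (hI : I = RingHom.ker (MvPolynomial.aeval b :
      MvPolynomial τ ℂ →ₐ[ℂ] MvPolynomial σ ℂ).toRingHom) :
    RingHom.ker (Polynomial.eval₂RingHom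
        (MvPolynomial.aeval (fun j => homog ω (b j)) :
          MvPolynomial τ ℂ →ₐ[ℂ] Polynomial (MvPolynomial σ ℂ)).toRingHom
        Polynomial.X)
      = idealHomog ν I := by
  set F := (MvPolynomial.aeval (fun j => homog ω (b j)) :
      MvPolynomial τ ℂ →ₐ[ℂ] Polynomial (MvPolynomial σ ℂ))
  set φ := Polynomial.eval₂RingHom F.toRingHom (Polynomial.X (R := MvPolynomial σ ℂ)) with hφ
  apply le_antisymm
  · intro g hg
    rw [RingHom.mem_ker] at hg
    have hgsum := sum_tcomp (ν := ν) g
    have hver : ∀ d ∈ wset ν g, IsHom ω d (φ (tcomp ν d g)) :=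
      fun d _ => phi_hom hdeg (isHom_tcomp d g)
    have hzero : ∀ d ∈ wset ν g, φ (tcomp ν d g) = 0 := by
      apply isHom_indep hver
      rw [← map_sum, hgsum, hg]
    rw [← hgsum]
    apply Ideal.sum_mem
    intro d hd
    exact hom_mem_idealHomog I hI (isHom_tcomp d g) (hzero d hd)
  · rw [idealHomog, Ideal.span_le]
    rintro g ⟨f, hfI, hf0, rfl⟩
    rw [SetLike.mem_coe, RingHom.mem_ker]
    apply isHom_eval_one_eq_zero (phi_hom hdeg (isHom_homog f))
    show Polynomial.eval 1 (Polynomial.eval₂ F.toRingHom Polynomial.X (homog ν f)) = 0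
    rw [phi_eval_one, eval_one_homog]
    rw [hI, RingHom.mem_ker] at hfI
    exact hfI

end aux5

section aux6
variable {σ τ : Type*} {ω : σ → ℤ} {ν : τ → ℤ} {b : τ → MvPolynomial σ ℂ}

lemma adjoin_gens_top :
    Algebra.adjoin ℂ ((Set.range fun j => Polynomial.C (MvPolynomial.X (R := ℂ) j)) ∪
        {(Polynomial.X : Polynomial (MvPolynomial τ ℂ))})
      = (⊤ : Subalgebra ℂ (Polynomial (MvPolynomial τ ℂ))) := by
  set A := Algebra.adjoin ℂ ((Set.range fun j => Polynomial.C (MvPolynomial.X (R := ℂ) j)) ∪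
      {(Polynomial.X : Polynomial (MvPolynomial τ ℂ))}) with hA
  have hX : (Polynomial.X : Polynomial (MvPolynomial τ ℂ)) ∈ A :=
    Algebra.subset_adjoin (Set.mem_union_right _ rfl)
  have hC : ∀ q : MvPolynomial τ ℂ, Polynomial.C q ∈ A := by
    intro q
    induction q using MvPolynomial.induction_on with
    | C c =>
        rw [show (Polynomial.C (MvPolynomial.C c) : Polynomial (MvPolynomial τ ℂ))
            = algebraMap ℂ _ c from by
          rw [Polynomial.algebraMap_apply, MvPolynomial.algebraMap_eq]]
        exact Subalgebra.algebraMap_mem A c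
    | add p q ihp ihq => rw [map_add]; exact Subalgebra.add_mem A ihp ihq
    | mul_X p j ih =>
        rw [map_mul]
        exact Subalgebra.mul_mem A ih
          (Algebra.subset_adjoin (Set.mem_union_left _ ⟨j, rfl⟩))
  rw [eq_top_iff]
  intro p _
  induction p using Polynomial.induction_on' with
  | add p q ihp ihq => exact Subalgebra.add_mem A (ihp trivial) (ihq trivial)
  | monomial m q =>
      rw [← Polynomial.C_mul_X_pow_eq_monomial]
      exact Subalgebra.mul_mem A (hC q) (Subalgebra.pow_mem A hX m)

lemma range_aevalTower_eq :
    (Polynomial.aevalTower (MvPolynomial.aeval (fun j => homog ω (b j)) :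
        MvPolynomial τ ℂ →ₐ[ℂ] Polynomial (MvPolynomial σ ℂ)) Polynomial.X).range
      = Algebra.adjoin ℂ (Set.range (fun j => homog ω (b j)) ∪
          {(Polynomial.X : Polynomial (MvPolynomial σ ℂ))}) := by
  set Φ := Polynomial.aevalTower (MvPolynomial.aeval (fun j => homog ω (b j)) :
      MvPolynomial τ ℂ →ₐ[ℂ] Polynomial (MvPolynomial σ ℂ)) Polynomial.X with hΦ
  rw [← Algebra.map_top, ← adjoin_gens_top, AlgHom.map_adjoin, Set.image_union,
    Set.image_singleton]
  congr 1
  congr 1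
  · rw [← Set.range_comp]
    exact congrArg Set.range (funext fun j => by
      show Φ (Polynomial.C (MvPolynomial.X j)) = homog ω (b j)
      rw [hΦ, Polynomial.aevalTower_C, MvPolynomial.aeval_X])
  · show {Φ Polynomial.X} = _
    rw [hΦ, Polynomial.aevalTower_X]

end aux6

/-- Let `b₀,…,b_k` be nonzero polynomials whose initial forms are single
terms with exponents `α_j`, let `ν := (⟨ω,α₀⟩,…,⟨ω,α_k⟩)` and let `I` be the ideal of
algebraic relations of the `b_j`. If `{b₀,…,b_k}` is a SAGBI basis with respect to `ω`,
then the kernel of the `ℂ[t]`-algebra homomorphism `ℂ[z₀,…,z_k][t] → ℂ[x₁,…,xₙ][t]`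
sending `z_j ↦ (b_j)_t^ω` and `t ↦ t` equals the homogenized ideal `I_t^ν`; consequently
the `ℂ[t]`-subalgebra of `ℂ[x₁,…,xₙ][t]` generated by the `(b_j)_t^ω` (i.e. the
ℂ-subalgebra generated by the `(b_j)_t^ω` together with `t`) is isomorphic to
`ℂ[z₀,…,z_k][t]/I_t^ν`. -/
theorem ker_homog_eval_eq_idealHomog {n k : ℕ} (ω : Fin n → ℤ)
    (b : Fin (k + 1) → MvPolynomial (Fin n) ℂ) (hb : ∀ j, b j ≠ 0)
    (α : Fin (k + 1) → (Fin n →₀ ℕ)) (c : Fin (k + 1) → ℂ) (hc : ∀ j, c j ≠ 0)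
    (hin : ∀ j, initForm ω (b j) = monomial (α j) (c j))
    (ν : Fin (k + 1) → ℤ) (hν : ν = fun j => wdot ω (α j))
    (I : Ideal (MvPolynomial (Fin (k + 1)) ℂ))
    (hI : I = RingHom.ker (MvPolynomial.aeval b :
        MvPolynomial (Fin (k + 1)) ℂ →ₐ[ℂ] MvPolynomial (Fin n) ℂ).toRingHom)
    (hsagbi : IsSagbiBasis ω b) :
    RingHom.ker (Polynomial.eval₂RingHom
        (MvPolynomial.aeval (fun j => homog ω (b j)) :
          MvPolynomial (Fin (k + 1)) ℂ →ₐ[ℂ] Polynomial (MvPolynomial (Fin n) ℂ)).toRingHom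
        Polynomial.X)
      = idealHomog ν I ∧
    Nonempty ((Polynomial (MvPolynomial (Fin (k + 1)) ℂ) ⧸ idealHomog ν I) ≃+*
      Algebra.adjoin ℂ
        (Set.range (fun j => homog ω (b j)) ∪ {(Polynomial.X : Polynomial (MvPolynomial (Fin n) ℂ))})) := by
  have hdeg : ∀ j, ν j = wdeg ω (b j) := by
    intro j
    have h := congrArg (MvPolynomial.coeff (α j)) (hin j)
    rw [show initForm ω (b j) = sel ω (wdeg ω (b j)) (b j) from rfl, coeff_sel,
      MvPolynomial.coeff_monomial, if_pos rfl] at h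
    rw [hν]
    by_contra hne
    rw [if_neg (by simpa using hne)] at h
    exact hc j h.symm
  have part1 := ker_eq_idealHomog (ω := ω) (ν := ν) (b := b) hdeg I hI
  refine ⟨part1, ?_⟩
  set Φ := Polynomial.aevalTower (MvPolynomial.aeval (fun j => homog ω (b j)) :
      MvPolynomial (Fin (k + 1)) ℂ →ₐ[ℂ] Polynomial (MvPolynomial (Fin n) ℂ)) Polynomial.X
    with hΦ
  have hkerΦ : idealHomog ν I = RingHom.ker Φ := by
    rw [← part1]
    rfl
  exact ⟨((Ideal.quotientEquivAlgOfEq ℂ hkerΦ).trans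
    ((Ideal.quotientKerEquivRange (R := ℂ) Φ).trans
      (Subalgebra.equivOfEq _ _ range_aevalTower_eq))).toRingEquiv⟩
end
end

section
/- Let I ⊆ ℂ[z₀,…,z_k] be an ideal and v ∈ ℤ^{k+1} a weight vector. Then the quotient ring ℂ[z₀,…,z_k][t]/I_t^v is flat as a module over the polynomial ring ℂ[t], via the natural map ℂ[t] → ℂ[z₀,…,z_k][t] → ℂ[z₀,…,z_k][t]/I_t^v. -/
open MvPolynomial Polynomial

noncomputable section

open scoped TensorProduct

-- ### Part 1: flatness from smul-regularity over a PID

lemma flat_of_smul_regular {R : Type*} {M : Type*} [CommRing R] [IsDomain R]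
    [IsPrincipalIdealRing R] [AddCommGroup M] [Module R M]
    (h : ∀ p : R, p ≠ 0 → ∀ x : M, p • x = 0 → x = 0) : Module.Flat R M := by
  rw [Module.Flat.iff_lift_lsmul_comp_subtype_injective]
  intro I _
  obtain ⟨p, rfl⟩ := (IsPrincipalIdealRing.principal I).principal
  by_cases hp : p = 0
  · subst hp
    have hz : ∀ z : (Ideal.span {(0:R)} : Ideal R) ⊗[R] M, z = 0 := by
      intro z
      induction z with
      | zero => rfl
      | tmul a m =>
        have ha0 : (a : R) = 0 := by
          obtain ⟨r, hr⟩ := Ideal.mem_span_singleton'.mp a.2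
          rw [mul_zero] at hr
          exact hr.symm
        have ha : a = 0 := Subtype.ext ha0
        rw [ha, TensorProduct.zero_tmul]
      | add x y hx hy => rw [hx, hy, add_zero]
    intro a b _
    rw [hz a, hz b]
  · have hmem : p ∈ Ideal.span {p} := Ideal.subset_span rfl
    have key : ∀ z : (Ideal.span {p} : Ideal R) ⊗[R] M,
        ∃ m : M, z = (⟨p, hmem⟩ : Ideal.span {p}) ⊗ₜ[R] m := by
      intro z
      induction z with
      | zero => exact ⟨0, (TensorProduct.tmul_zero _ _).symm⟩
      | tmul a m =>
        obtain ⟨r, hr⟩ := Ideal.mem_span_singleton'.mp a.2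
        refine ⟨r • m, ?_⟩
        have ha : a = r • (⟨p, hmem⟩ : Ideal.span {p}) := Subtype.ext (by
          simp [smul_eq_mul, hr.symm])
        rw [ha, TensorProduct.smul_tmul]
      | add x y hx hy =>
        obtain ⟨m₁, rfl⟩ := hx
        obtain ⟨m₂, rfl⟩ := hy
        exact ⟨m₁ + m₂, (TensorProduct.tmul_add _ _ _).symm⟩
    intro x y hxy
    obtain ⟨mx, rfl⟩ := key x
    obtain ⟨my, rfl⟩ := key y
    simp only [TensorProduct.lift.tmul, LinearMap.coe_comp, Function.comp_apply,
      Submodule.coe_subtype, LinearMap.lsmul_apply] at hxy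
    have : p • (mx - my) = 0 := by rw [smul_sub, hxy, sub_self]
    rw [sub_eq_zero.mp (h p hp _ this)]

namespace GrDeg

variable {σ : Type*} (v : σ → ℤ)

lemma wdot_eq_weight (α : σ →₀ ℕ) : wdot v α = Finsupp.weight v α := by
  simp [wdot, Finsupp.weight_apply, Finsupp.sum, mul_comm]

lemma wdot_le_wdeg {f : MvPolynomial σ ℂ} {α : σ →₀ ℕ} (hα : α ∈ f.support) :
    wdot v α ≤ wdeg v f := by
  have h := Finset.le_sup (f := fun α => (wdot v α : WithBot ℤ)) hα
  unfold wdeg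
  cases hs : f.support.sup fun α => (wdot v α : WithBot ℤ) with
  | bot => rw [hs] at h; exact absurd h (by simp)
  | coe d => rw [hs] at h; simpa using h

/-- weighted homogeneous component of `F : ℂ[z][t]` for total weight `m`
(`z^α t^e` has weight `⟨v,α⟩ + e`). -/
def pcomp (m : ℤ) (F : Polynomial (MvPolynomial σ ℂ)) : Polynomial (MvPolynomial σ ℂ) :=
  ∑ e ∈ F.support,
    Polynomial.C (weightedHomogeneousComponent v (m - e) (F.coeff e)) * Polynomial.X ^ e

lemma coeff_pcomp (m : ℤ) (F : Polynomial (MvPolynomial σ ℂ)) (e : ℕ) :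
    (pcomp v m F).coeff e = weightedHomogeneousComponent v (m - e) (F.coeff e) := by
  classical
  rw [pcomp, Polynomial.finset_sum_coeff]
  simp only [Polynomial.coeff_C_mul, Polynomial.coeff_X_pow, mul_ite, mul_one, mul_zero]
  rw [Finset.sum_ite_eq F.support e]
  split_ifs with h
  · rfl
  · rw [Polynomial.notMem_support_iff.mp h, map_zero]

lemma pcomp_zero (m : ℤ) : pcomp v m 0 = 0 := by
  apply Polynomial.ext; intro e
  simp [coeff_pcomp]

lemma pcomp_add (m : ℤ) (F G : Polynomial (MvPolynomial σ ℂ)) :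
    pcomp v m (F + G) = pcomp v m F + pcomp v m G := by
  apply Polynomial.ext; intro e
  simp [coeff_pcomp, Polynomial.coeff_add]

lemma pcomp_sum {ι : Type*} (s : Finset ι) (m : ℤ) (F : ι → Polynomial (MvPolynomial σ ℂ)) :
    pcomp v m (∑ i ∈ s, F i) = ∑ i ∈ s, pcomp v m (F i) := by
  classical
  induction s using Finset.cons_induction with
  | empty => simp [pcomp_zero]
  | cons i s his ih => rw [Finset.sum_cons, Finset.sum_cons, pcomp_add, ih]

/-- `g` is a homogeneous element of `ℂ[z][t]` of total weight `n`. -/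
def PHomog (n : ℤ) (g : Polynomial (MvPolynomial σ ℂ)) : Prop :=
  ∀ e : ℕ, IsWeightedHomogeneous v (g.coeff e) (n - e)

lemma pcomp_phomog (m : ℤ) (F : Polynomial (MvPolynomial σ ℂ)) : PHomog v m (pcomp v m F) := by
  intro e
  rw [coeff_pcomp]
  exact weightedHomogeneousComponent_isWeightedHomogeneous _ _

lemma pcomp_of_phomog {n : ℤ} {g : Polynomial (MvPolynomial σ ℂ)} (hg : PHomog v n g) (m : ℤ) :
    pcomp v m g = if m = n then g else 0 := by
  split_ifs with h
  · subst h
    apply Polynomial.ext; intro e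
    rw [coeff_pcomp]
    exact IsWeightedHomogeneous.weightedHomogeneousComponent_same (hg e)
  · apply Polynomial.ext; intro e
    rw [coeff_pcomp, Polynomial.coeff_zero]
    exact IsWeightedHomogeneous.weightedHomogeneousComponent_ne _ (hg e) (by omega)

/-- component of a product with a homogeneous mv-polynomial. -/
lemma whc_mul_homog {g f : MvPolynomial σ ℂ} {u : ℤ} (hg : IsWeightedHomogeneous v g u)
    (q : ℤ) : weightedHomogeneousComponent v q (g * f)
      = g * weightedHomogeneousComponent v (q - u) f := by
  classical
  apply MvPolynomial.ext; intro d
  rw [coeff_weightedHomogeneousComponent, MvPolynomial.coeff_mul, MvPolynomial.coeff_mul]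
  split_ifs with h
  · apply Finset.sum_congr rfl
    intro x hx
    rw [coeff_weightedHomogeneousComponent]
    by_cases hg0 : MvPolynomial.coeff x.1 g = 0
    · rw [hg0, zero_mul, zero_mul]
    · have hw : Finsupp.weight v x.1 = u := hg hg0
      have hxd : x.1 + x.2 = d := Finset.HasAntidiagonal.mem_antidiagonal.mp hx
      have hadd : Finsupp.weight v x.1 + Finsupp.weight v x.2 = Finsupp.weight v d := by
        rw [← hxd, map_add]
      rw [if_pos (by omega)]
  · symm
    apply Finset.sum_eq_zero
    intro x hx
    rw [coeff_weightedHomogeneousComponent]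
    by_cases hg0 : MvPolynomial.coeff x.1 g = 0
    · rw [hg0, zero_mul]
    · have hw : Finsupp.weight v x.1 = u := hg hg0
      have hxd : x.1 + x.2 = d := Finset.HasAntidiagonal.mem_antidiagonal.mp hx
      have hadd : Finsupp.weight v x.1 + Finsupp.weight v x.2 = Finsupp.weight v d := by
        rw [← hxd, map_add]
      rw [if_neg (by omega), mul_zero]

lemma pcomp_mul_phomog {n : ℤ} {g : Polynomial (MvPolynomial σ ℂ)} (hg : PHomog v n g)
    (m : ℤ) (F : Polynomial (MvPolynomial σ ℂ)) :
    pcomp v m (g * F) = g * pcomp v (m - n) F := by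
  classical
  apply Polynomial.ext; intro e
  rw [coeff_pcomp, Polynomial.coeff_mul, Polynomial.coeff_mul, map_sum]
  apply Finset.sum_congr rfl
  intro x hx
  rw [coeff_pcomp, whc_mul_homog v (hg x.1)]
  have hxe : x.1 + x.2 = e := Finset.HasAntidiagonal.mem_antidiagonal.mp hx
  have hidx : m - (e : ℤ) - (n - (x.1 : ℤ)) = m - n - (x.2 : ℤ) := by omega
  rw [hidx]

lemma homog_phomog (f : MvPolynomial σ ℂ) : PHomog v (wdeg v f) (homog v f) := by
  classical
  intro e
  have hco : (homog v f).coeff e = ∑ α ∈ f.support,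
      if (wdeg v f - wdot v α).toNat = e then monomial α (f.coeff α) else 0 := by
    rw [homog, Polynomial.finset_sum_coeff]
    apply Finset.sum_congr rfl
    intro α _
    rw [Polynomial.coeff_C_mul, Polynomial.coeff_X_pow]
    split_ifs <;> simp_all
  rw [hco]
  apply IsWeightedHomogeneous.sum
  intro α hα
  split_ifs with hd
  · apply isWeightedHomogeneous_monomial
    rw [← wdot_eq_weight]
    have h1 := wdot_le_wdeg v hα
    omega
  · exact isWeightedHomogeneous_zero _ _ _

/-- the finitely many weights appearing in `F`. -/
def pweights (F : Polynomial (MvPolynomial σ ℂ)) : Finset ℤ :=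
  F.support.biUnion fun e => (F.coeff e).support.image fun α => Finsupp.weight v α + e

lemma sum_whc {f : MvPolynomial σ ℂ} {T : Finset ℤ}
    (hT : ∀ α ∈ f.support, Finsupp.weight v α ∈ T) :
    ∑ q ∈ T, weightedHomogeneousComponent v q f = f := by
  classical
  apply MvPolynomial.ext; intro β
  rw [MvPolynomial.coeff_sum]
  simp only [coeff_weightedHomogeneousComponent]
  rw [Finset.sum_ite_eq T (Finsupp.weight v β)]
  split_ifs with h
  · rfl
  · rcases eq_or_ne (MvPolynomial.coeff β f) 0 with h0 | h0
    · rw [h0]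
    · exact absurd (hT β (MvPolynomial.mem_support_iff.mpr h0)) h

lemma sum_pcomp (F : Polynomial (MvPolynomial σ ℂ)) :
    ∑ m ∈ pweights v F, pcomp v m F = F := by
  classical
  apply Polynomial.ext; intro e
  rw [Polynomial.finset_sum_coeff]
  simp only [coeff_pcomp]
  rw [← Finset.sum_image (f := fun q => weightedHomogeneousComponent v q (F.coeff e))
      (g := fun m => m - (e : ℤ)) (fun x _ y _ h => by simpa using h)]
  apply sum_whc
  intro α hα
  simp only [Finset.mem_image]
  refine ⟨Finsupp.weight v α + e, ?_, by ring⟩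
  apply Finset.mem_biUnion.mpr
  refine ⟨e, ?_, Finset.mem_image.mpr ⟨α, hα, rfl⟩⟩
  rw [Polynomial.mem_support_iff]
  intro h0
  rw [h0] at hα
  simp at hα

lemma pcomp_eq_zero_of_not_mem {F : Polynomial (MvPolynomial σ ℂ)} {m : ℤ}
    (hm : m ∉ pweights v F) : pcomp v m F = 0 := by
  classical
  apply Polynomial.ext; intro e
  rw [coeff_pcomp, Polynomial.coeff_zero]
  apply weightedHomogeneousComponent_eq_zero'
  intro α hα hw
  apply hm
  apply Finset.mem_biUnion.mpr
  refine ⟨e, ?_, Finset.mem_image.mpr ⟨α, hα, by omega⟩⟩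
  rw [Polynomial.mem_support_iff]
  intro h0
  rw [h0] at hα
  simp at hα

variable (I : Ideal (MvPolynomial σ ℂ))

lemma pcomp_mem_idealHomog {G : Polynomial (MvPolynomial σ ℂ)} (hG : G ∈ idealHomog v I)
    (m : ℤ) : pcomp v m G ∈ idealHomog v I := by
  classical
  have hmain : ∀ m : ℤ, pcomp v m G ∈ idealHomog v I := by
    refine Submodule.span_induction ?_ ?_ ?_ ?_ hG
    · rintro x ⟨f, hfI, hf0, rfl⟩
      intro m
      rw [pcomp_of_phomog v (homog_phomog v f)]
      split_ifs
      · exact Ideal.subset_span ⟨f, hfI, hf0, rfl⟩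
      · exact zero_mem _
    · intro m; rw [pcomp_zero]; exact zero_mem _
    · intro x y _ _ ihx ihy m
      rw [pcomp_add]
      exact add_mem (ihx m) (ihy m)
    · intro a x _ ih m
      rw [smul_eq_mul, ← sum_pcomp v a, Finset.sum_mul, pcomp_sum]
      apply sum_mem
      intro n _
      rw [pcomp_mul_phomog v (pcomp_phomog v n a)]
      exact Ideal.mul_mem_left _ _ (ih (m - n))
  exact hmain m

lemma eval_one_homog (f : MvPolynomial σ ℂ) : Polynomial.eval 1 (homog v f) = f := by
  rw [homog, Polynomial.eval_finset_sum]
  simp only [Polynomial.eval_mul, Polynomial.eval_C, Polynomial.eval_pow, Polynomial.eval_X,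
    one_pow, mul_one]
  exact MvPolynomial.support_sum_monomial_coeff f

lemma eval_one_mem {G : Polynomial (MvPolynomial σ ℂ)} (hG : G ∈ idealHomog v I) :
    Polynomial.eval 1 G ∈ I := by
  refine Submodule.span_induction ?_ ?_ ?_ ?_ hG
  · rintro x ⟨f, hfI, -, rfl⟩
    rw [eval_one_homog]
    exact hfI
  · rw [Polynomial.eval_zero]; exact zero_mem _
  · intro x y _ _ hx hy
    rw [Polynomial.eval_add]
    exact add_mem hx hy
  · intro a x _ hx
    rw [smul_eq_mul, Polynomial.eval_mul]
    exact Ideal.mul_mem_left _ _ hx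

lemma coeff_coeff_homog (f : MvPolynomial σ ℂ) (e : ℕ) (β : σ →₀ ℕ) :
    MvPolynomial.coeff β ((homog v f).coeff e)
      = if (wdeg v f - wdot v β).toNat = e then f.coeff β else 0 := by
  classical
  rw [homog, Polynomial.finset_sum_coeff]
  simp only [Polynomial.coeff_C_mul, Polynomial.coeff_X_pow, mul_ite, mul_one, mul_zero]
  rw [MvPolynomial.coeff_sum]
  simp only [apply_ite (MvPolynomial.coeff β), MvPolynomial.coeff_monomial,
    MvPolynomial.coeff_zero]
  by_cases hβ : β ∈ f.support
  · rw [Finset.sum_eq_single β]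
    · split_ifs with h1 h2 h2 <;> simp_all
    · intro α _ hne
      split_ifs <;> simp_all
    · intro h; exact absurd hβ h
  · rw [Finset.sum_eq_zero, eq_comm]
    · have h0 : f.coeff β = 0 := MvPolynomial.notMem_support_iff.mp hβ
      split_ifs <;> simp [h0]
    · intro α hα
      have hne : α ≠ β := fun h => hβ (h ▸ hα)
      split_ifs <;> simp_all

/-- rehomogenization: a homogeneous `G` with dehomogenization in `I` lies in `I_t^v`. -/
lemma mem_idealHomog_of_phomog {n : ℤ} {G : Polynomial (MvPolynomial σ ℂ)}
    (hG : PHomog v n G) (hD : Polynomial.eval 1 G ∈ I) : G ∈ idealHomog v I := by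
  classical
  by_cases hG0 : G = 0
  · subst hG0; exact zero_mem _
  set f := Polynomial.eval 1 G with hf
  set s := G.natTrailingDegree with hs
  have hfs : f = ∑ e ∈ G.support, G.coeff e := by
    rw [hf, Polynomial.eval_eq_sum, Polynomial.sum_def]
    simp
  have hcoefff : ∀ β, f.coeff β = ∑ e ∈ G.support, (G.coeff e).coeff β := by
    intro β; rw [hfs, MvPolynomial.coeff_sum]
  have huniq : ∀ (β : σ →₀ ℕ) (e : ℕ), (G.coeff e).coeff β ≠ 0 →
      f.coeff β = (G.coeff e).coeff β ∧ Finsupp.weight v β = n - e := by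
    intro β e hne
    have hwe := hG e hne
    refine ⟨?_, hwe⟩
    rw [hcoefff]
    apply Finset.sum_eq_single
    · intro e' _ hee
      by_contra h0
      have hwe' := hG e' h0
      have : (e' : ℤ) = (e : ℤ) := by omega
      exact hee (by exact_mod_cast this)
    · intro h
      exact absurd hne (by rw [Polynomial.notMem_support_iff.mp h]; simp)
  have hGs : G.coeff s ≠ 0 := by
    rw [hs]
    exact fun h => hG0 (Polynomial.trailingCoeff_eq_zero.mp h)
  obtain ⟨α₀, hα₀⟩ := (MvPolynomial.support_nonempty.mpr hGs)
  have hα₀' : (G.coeff s).coeff α₀ ≠ 0 := MvPolynomial.mem_support_iff.mp hα₀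
  have hu₀ := huniq α₀ s hα₀'
  have hfα₀ : f.coeff α₀ ≠ 0 := by rw [hu₀.1]; exact hα₀'
  have hfne : f ≠ 0 := fun h => hfα₀ (by rw [h]; simp)
  have hle : ∀ α ∈ f.support, wdot v α ≤ n - s := by
    intro α hα
    have hα' : f.coeff α ≠ 0 := MvPolynomial.mem_support_iff.mp hα
    have hex : ∃ e ∈ G.support, (G.coeff e).coeff α ≠ 0 := by
      by_contra hno
      push_neg at hno
      apply hα'
      rw [hcoefff]
      exact Finset.sum_eq_zero hno
    obtain ⟨e, heG, hene⟩ := hex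
    have hwe := hG e hene
    have hse : s ≤ e := Polynomial.natTrailingDegree_le_of_ne_zero
      (Polynomial.mem_support_iff.mp heG)
    rw [wdot_eq_weight]
    omega
  have hwdeg : wdeg v f = n - s := by
    have h1 : f.support.sup (fun α => (wdot v α : WithBot ℤ)) = ((n - s : ℤ) : WithBot ℤ) := by
      apply le_antisymm
      · apply Finset.sup_le
        intro α hα
        exact_mod_cast hle α hα
      · have hαf : α₀ ∈ f.support := MvPolynomial.mem_support_iff.mpr hfα₀
        have h2 := Finset.le_sup (f := fun α => (wdot v α : WithBot ℤ)) hαf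
        have hw0 : wdot v α₀ = n - s := by rw [wdot_eq_weight]; exact hu₀.2
        simpa [hw0] using h2
    rw [wdeg, h1]
    rfl
  have hkey : G = Polynomial.X ^ s * homog v f := by
    apply Polynomial.ext; intro e
    rw [mul_comm, Polynomial.coeff_mul_X_pow']
    by_cases hse : s ≤ e
    · rw [if_pos hse]
      apply MvPolynomial.ext; intro β
      rw [coeff_coeff_homog]
      by_cases hb : ∃ e'' : ℕ, (G.coeff e'').coeff β ≠ 0
      · obtain ⟨e'', he''⟩ := hb
        have h1 := huniq β e'' he''
        have hs'' : s ≤ e'' := Polynomial.natTrailingDegree_le_of_ne_zero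
          (fun h => he'' (by rw [h]; simp))
        have hwb : wdot v β = n - e'' := by rw [wdot_eq_weight]; exact h1.2
        by_cases hee : e'' = e
        · subst hee
          rw [if_pos (by rw [hwdeg, hwb]; omega)]
          exact h1.1.symm
        · rw [if_neg (by rw [hwdeg, hwb]; omega)]
          by_contra hne
          have hwe := hG e hne
          have h3 : (e'' : ℤ) = (e : ℤ) := by omega
          exact hee (by exact_mod_cast h3)
      · push_neg at hb
        rw [hb e]
        have hfb : f.coeff β = 0 := by
          rw [hcoefff]
          exact Finset.sum_eq_zero fun e' _ => hb e'
        rw [hfb]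
        simp
    · rw [if_neg hse, Polynomial.coeff_eq_zero_of_lt_natTrailingDegree (by omega)]
  rw [hkey]
  exact Ideal.mul_mem_left _ _ (Ideal.subset_span ⟨f, hD, hfne, rfl⟩)

/-- main torsion-freeness statement. -/
lemma regular {p : Polynomial ℂ} (hp : p ≠ 0) {F : Polynomial (MvPolynomial σ ℂ)}
    (hF : Polynomial.map (MvPolynomial.C : ℂ →+* MvPolynomial σ ℂ) p * F ∈ idealHomog v I) :
    F ∈ idealHomog v I := by
  classical
  set J := idealHomog v I with hJ
  set j0 := p.natTrailingDegree with hj0def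
  have ha : p.coeff j0 ≠ 0 := fun h => hp (Polynomial.trailingCoeff_eq_zero.mp h)
  have hmap : Polynomial.map (MvPolynomial.C : ℂ →+* MvPolynomial σ ℂ) p
      = ∑ j ∈ p.support, Polynomial.C (MvPolynomial.C (p.coeff j)) * Polynomial.X ^ j := by
    apply Polynomial.ext; intro e
    rw [Polynomial.coeff_map, Polynomial.finset_sum_coeff]
    simp only [Polynomial.coeff_C_mul, Polynomial.coeff_X_pow, mul_ite, mul_one, mul_zero]
    rw [Finset.sum_ite_eq p.support e]
    split_ifs with h
    · rfl
    · rw [Polynomial.notMem_support_iff.mp h]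
      simp
  have hgj : ∀ j : ℕ, PHomog v j (Polynomial.C (MvPolynomial.C (p.coeff j)) * Polynomial.X ^ j) := by
    intro j e
    rw [Polynomial.coeff_C_mul, Polynomial.coeff_X_pow, mul_ite, mul_one, mul_zero]
    split_ifs with h
    · have h0 : (j : ℤ) - (e : ℤ) = 0 := by omega
      rw [h0]
      exact isWeightedHomogeneous_C v _
    · exact isWeightedHomogeneous_zero ℂ v _
  have hstep : ∀ m : ℤ, (∀ m' : ℤ, m' < m → pcomp v m' F ∈ J) → pcomp v m F ∈ J := by
    intro m IH
    have h1 : pcomp v (m + j0) (Polynomial.map (MvPolynomial.C : ℂ →+* MvPolynomial σ ℂ) p * F)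
        ∈ J := pcomp_mem_idealHomog v I hF _
    rw [hmap, Finset.sum_mul, pcomp_sum,
      Finset.sum_congr rfl (fun j _ => pcomp_mul_phomog v (hgj j) _ F)] at h1
    have hj0mem : j0 ∈ p.support := Polynomial.mem_support_iff.mpr ha
    rw [← Finset.add_sum_erase _ _ hj0mem] at h1
    have hrest : ∑ j ∈ p.support.erase j0,
        (Polynomial.C (MvPolynomial.C (p.coeff j)) * Polynomial.X ^ j) * pcomp v (m + j0 - j) F
        ∈ J := by
      apply sum_mem
      intro j hj
      have hjne := Finset.ne_of_mem_erase hj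
      have hjmem := Finset.mem_of_mem_erase hj
      have hjle : j0 ≤ j := Polynomial.natTrailingDegree_le_of_ne_zero
        (Polynomial.mem_support_iff.mp hjmem)
      exact Ideal.mul_mem_left _ _ (IH (m + j0 - j) (by omega))
    have hj0t : (Polynomial.C (MvPolynomial.C (p.coeff j0)) * Polynomial.X ^ j0)
        * pcomp v m F ∈ J := by
      have h2 := J.sub_mem h1 hrest
      have h3 : m + (j0 : ℤ) - j0 = m := by omega
      rw [add_sub_cancel_right, h3] at h2
      exact h2
    have hD : Polynomial.eval 1 ((Polynomial.C (MvPolynomial.C (p.coeff j0))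
        * Polynomial.X ^ j0) * pcomp v m F) ∈ I := eval_one_mem v I hj0t
    rw [Polynomial.eval_mul, Polynomial.eval_mul, Polynomial.eval_C, Polynomial.eval_pow,
      Polynomial.eval_X, one_pow, mul_one] at hD
    have hD2 : Polynomial.eval 1 (pcomp v m F) ∈ I := by
      have h4 := I.mul_mem_left (MvPolynomial.C (p.coeff j0)⁻¹) hD
      rwa [← mul_assoc, ← MvPolynomial.C_mul, inv_mul_cancel₀ ha, MvPolynomial.C_1,
        one_mul] at h4
    exact mem_idealHomog_of_phomog v I (pcomp_phomog v m F) hD2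
  have hallm : ∀ m : ℤ, pcomp v m F ∈ J := by
    by_cases hS : (pweights v F).Nonempty
    · set B := (pweights v F).min' hS with hB
      have hbelow : ∀ m : ℤ, m < B → pcomp v m F ∈ J := by
        intro m hm
        rw [pcomp_eq_zero_of_not_mem v
          (fun hmem => absurd ((pweights v F).min'_le m hmem) (by omega))]
        exact zero_mem _
      have hall : ∀ n : ℕ, ∀ m : ℤ, m < B + n → pcomp v m F ∈ J := by
        intro n
        induction n with
        | zero => intro m hm; exact hbelow m (by simpa using hm)
        | succ n ih =>
          intro m hm
          by_cases hmn : m < B + n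
          · exact ih m hmn
          · have hm' : m = B + n := by push_cast at hm ⊢; omega
            apply hstep
            intro m' hlt
            exact ih m' (by omega)
      intro m
      apply hall ((m - B).toNat + 1) m
      push_cast
      omega
    · intro m
      rw [pcomp_eq_zero_of_not_mem v (fun hmem => hS ⟨m, hmem⟩)]
      exact zero_mem _
  rw [← sum_pcomp v F]
  exact sum_mem fun m _ => hallm m

end GrDeg

set_option synthInstance.maxHeartbeats 1000000 in
set_option maxHeartbeats 1000000 in
/-- For an ideal `I ⊆ ℂ[z₀,…,z_k]` and a weight `v ∈ ℤ^{k+1}`, the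
quotient `ℂ[z₀,…,z_k][t]/I_t^v` is flat as a module over `ℂ[t]`, via the natural map
`ℂ[t] → ℂ[z₀,…,z_k][t] → ℂ[z₀,…,z_k][t]/I_t^v`. -/
theorem groebner_degeneration_flat {k : ℕ}
    (I : Ideal (MvPolynomial (Fin (k + 1)) ℂ)) (v : Fin (k + 1) → ℤ) :
    @Module.Flat (Polynomial ℂ)
      (Polynomial (MvPolynomial (Fin (k + 1)) ℂ) ⧸ idealHomog v I) _ _
      (Module.compHom _
        ((Ideal.Quotient.mk (idealHomog v I)).comp
          (Polynomial.mapRingHom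
            (MvPolynomial.C : ℂ →+* MvPolynomial (Fin (k + 1)) ℂ)))) := by
  letI : Module (Polynomial ℂ)
      (Polynomial (MvPolynomial (Fin (k + 1)) ℂ) ⧸ idealHomog v I) :=
    Module.compHom _ ((Ideal.Quotient.mk (idealHomog v I)).comp
      (Polynomial.mapRingHom (MvPolynomial.C : ℂ →+* MvPolynomial (Fin (k + 1)) ℂ)))
  apply flat_of_smul_regular
  intro p hp x hx
  obtain ⟨F, rfl⟩ := Ideal.Quotient.mk_surjective x
  have hsm : p • (Ideal.Quotient.mk (idealHomog v I) F)
      = Ideal.Quotient.mk (idealHomog v I)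
        (Polynomial.map (MvPolynomial.C : ℂ →+* MvPolynomial (Fin (k + 1)) ℂ) p * F) := by
    show ((Ideal.Quotient.mk (idealHomog v I)).comp
        (Polynomial.mapRingHom (MvPolynomial.C : ℂ →+* MvPolynomial (Fin (k + 1)) ℂ))) p
        • (Ideal.Quotient.mk (idealHomog v I) F) = _
    rw [smul_eq_mul, RingHom.comp_apply, Polynomial.coe_mapRingHom, ← map_mul]
  rw [hsm, Ideal.Quotient.eq_zero_iff_mem] at hx
  exact Ideal.Quotient.eq_zero_iff_mem.mpr (GrDeg.regular v I hp hx)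
end
end
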